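/- Over ZMod p with p prime, for z ∈ {0,1}^t the i-th digit in base p of the integer z₁+⋯+z_t equals the elementary symmetric polynomial S_{p^i}(z) reduced mod p; i.e., if z₁+⋯+z_t = ∑_j a_j p^j with 0 ≤ a_j < p, then a_i ≡ S_{p^i}(z₁,…,z_t) (mod p). -/

import Mathlib

open Finset

/-- For `z ∈ {0,1}^t`, the `i`-th base-`p` digit of `z₁+⋯+z_t` equals the
elementary symmetric polynomial `S_{p^i}(z)` mod `p`. -/
theorem stmt9 (p t i : ℕ) (hp : p.Prime) (z : Fin t → Bool) :
    ((((∑ j, if z j then 1 else 0) / p ^ i) % p : ℕ) : ZMod p) =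
      ∑ S ∈ Finset.powersetCard (p ^ i) (Finset.univ : Finset (Fin t)),
        ∏ j ∈ S, ((if z j then 1 else 0 : ℕ) : ZMod p) := by
  set n : ℕ := ∑ j, if z j then 1 else 0 with hn
  have hp2 := hp.two_le
  -- RHS equals choose n (p^i) mod p
  have hRHS : (∑ S ∈ Finset.powersetCard (p ^ i) (Finset.univ : Finset (Fin t)),
      ∏ j ∈ S, ((if z j then 1 else 0 : ℕ) : ZMod p)) = (n.choose (p ^ i) : ZMod p) := by
    have h1 : ∀ S : Finset (Fin t),
        (∏ j ∈ S, ((if z j then 1 else 0 : ℕ) : ZMod p)) =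
          if ∀ j ∈ S, z j = true then (1 : ZMod p) else 0 := by
      intro S
      simp [apply_ite (Nat.cast : ℕ → ZMod p), Finset.prod_boole]
    simp_rw [h1]
    rw [Finset.sum_boole]
    have h2 : Finset.filter (fun S => ∀ j ∈ S, z j = true)
        (Finset.powersetCard (p ^ i) (Finset.univ : Finset (Fin t)))
          = Finset.powersetCard (p ^ i) (Finset.univ.filter (fun j => z j = true)) := by
      ext S
      simp only [Finset.mem_filter, Finset.mem_powersetCard, Finset.subset_iff,
        Finset.mem_univ, true_and, Finset.mem_filter]
      tauto
    rw [h2, Finset.card_powersetCard]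
    have h3 : (Finset.univ.filter (fun j => z j = true)).card = n := by
      rw [Finset.card_filter]
    rw [h3]
  rw [hRHS]
  -- Lucas
  haveI : Fact p.Prime := Fact.mk hp
  have hl := Choose.choose_modEq_choose_mul_prod_range_choose (p := p) (n := n) (k := p ^ i) (i + 1)
  have hdiv : p ^ i / p ^ (i + 1) = 0 :=
    Nat.div_eq_of_lt (Nat.pow_lt_pow_right hp.one_lt (by omega))
  have hterm : p ^ i / p ^ i % p = 1 := by
    rw [Nat.div_self (pow_pos (by omega : 0 < p) i)]
    exact Nat.one_mod_eq_one.mpr (by omega)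
  have hrest : ∀ j ∈ Finset.range i, p ^ i / p ^ j % p = 0 := by
    intro j hj
    have hj' : j < i := Finset.mem_range.mp hj
    rw [Nat.pow_div (le_of_lt hj') (by omega),
      show i - j = (i - j - 1) + 1 by omega, pow_succ', Nat.mul_mod_right]
  have hprod : (∏ j ∈ Finset.range (i + 1),
      Nat.choose (n / p ^ j % p) (p ^ i / p ^ j % p)) = n / p ^ i % p := by
    rw [Finset.prod_range_succ, hterm, Nat.choose_one_right,
      Finset.prod_eq_one (fun j hj => by rw [hrest j hj, Nat.choose_zero_right]), one_mul]
  rw [hdiv, Nat.choose_zero_right, hprod] at hl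
  rw [Nat.cast_one, one_mul] at hl
  have hl2 := (ZMod.intCast_eq_intCast_iff _ _ _).mpr hl
  exact_mod_cast hl2.symm
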